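/- Assume the TRI hypothesis. Then for every p ∈ (0,∞), every t ∈ ℝ and every α ∈ ℝ: e_{p,t}(α) = e_{p,t}(1-α) and e_{p,t}(α) = e_{p,-t}(α); the same two identities hold for e_{∞,t}. -/

import Mathlib

open Matrix MeasureTheory Filter Topology
open scoped ComplexOrder

/-- Functional calculus for a Hermitian complex matrix: apply `f : ℝ → ℝ` to the eigenvalues
(junk value `0` if the matrix is not Hermitian). -/
noncomputable def matCFC {n : ℕ} (f : ℝ → ℝ) (A : Matrix (Fin n) (Fin n) ℂ) :
    Matrix (Fin n) (Fin n) ℂ :=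
  if h : A.IsHermitian then h.cfc f else 0

/-- Functional-calculus logarithm of a (positive-definite Hermitian) matrix. -/
noncomputable def mlog {n : ℕ} (A : Matrix (Fin n) (Fin n) ℂ) : Matrix (Fin n) (Fin n) ℂ :=
  matCFC Real.log A

/-- Functional-calculus real power of a (positive-definite Hermitian) matrix. -/
noncomputable def mpow {n : ℕ} (A : Matrix (Fin n) (Fin n) ℂ) (q : ℝ) :
    Matrix (Fin n) (Fin n) ℂ :=
  matCFC (fun x => x ^ q) A

/-- Matrix exponential. -/
noncomputable def mexp {n : ℕ} (A : Matrix (Fin n) (Fin n) ℂ) : Matrix (Fin n) (Fin n) ℂ :=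
  NormedSpace.exp A

/-- Heisenberg evolution `τ^t(A) = e^{itH} A e^{-itH}`. -/
noncomputable def heisenberg {n : ℕ} (H : Matrix (Fin n) (Fin n) ℂ) (t : ℝ)
    (A : Matrix (Fin n) (Fin n) ℂ) : Matrix (Fin n) (Fin n) ℂ :=
  mexp ((Complex.I * t) • H) * A * mexp ((-(Complex.I * t)) • H)

/-- Schrödinger evolution of the state, `ω_t = e^{-itH} ω e^{itH}`. -/
noncomputable def stateT {n : ℕ} (H ω : Matrix (Fin n) (Fin n) ℂ) (t : ℝ) :
    Matrix (Fin n) (Fin n) ℂ :=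
  mexp ((-(Complex.I * t)) • H) * ω * mexp ((Complex.I * t) • H)

/-- Entropy production observable `σ = -i (H log ω - log ω H)`. -/
noncomputable def entropyProd {n : ℕ} (H ω : Matrix (Fin n) (Fin n) ℂ) :
    Matrix (Fin n) (Fin n) ℂ :=
  (-Complex.I) • (H * mlog ω - mlog ω * H)

/-- `σ_s = τ^s(σ)`. -/
noncomputable def sigmaAt {n : ℕ} (H ω : Matrix (Fin n) (Fin n) ℂ) (s : ℝ) :
    Matrix (Fin n) (Fin n) ℂ :=
  heisenberg H s (entropyProd H ω)

/-- `∫₀^t σ_s ds` (entrywise integral). -/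
noncomputable def intSigma {n : ℕ} (H ω : Matrix (Fin n) (Fin n) ℂ) (t : ℝ) :
    Matrix (Fin n) (Fin n) ℂ :=
  Matrix.of fun i j => ∫ s in (0:ℝ)..t, sigmaAt H ω s i j

/-- Mean entropy production rate `Σ^t = (1/t) ∫₀^t σ_s ds`. -/
noncomputable def meanSigma {n : ℕ} (H ω : Matrix (Fin n) (Fin n) ℂ) (t : ℝ) :
    Matrix (Fin n) (Fin n) ℂ :=
  ((t : ℂ)⁻¹) • intSigma H ω t

/-- The Evans–Searles functional `ES_t(α) = log tr(ω e^{-α ∫₀^t σ_s ds})`. -/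
noncomputable def ES {n : ℕ} (H ω : Matrix (Fin n) (Fin n) ℂ) (t α : ℝ) : ℝ :=
  Real.log ((Matrix.trace (ω * mexp ((-α) • intSigma H ω t))).re)

/-- The entropic pressure functional `e_{p,t}(α)` for `0 < p < ∞`. -/
noncomputable def ePressure {n : ℕ} (H ω : Matrix (Fin n) (Fin n) ℂ) (p t α : ℝ) : ℝ :=
  Real.log ((Matrix.trace (mpow
    (mpow ω ((1 - α)/p) * mpow (stateT H ω t) (2*α/p) * mpow ω ((1 - α)/p)) (p/2))).re)

/-- The entropic pressure functional `e_{∞,t}(α)`. -/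
noncomputable def ePressureInf {n : ℕ} (H ω : Matrix (Fin n) (Fin n) ℂ) (t α : ℝ) : ℝ :=
  Real.log ((Matrix.trace (mexp ((1 - α) • mlog ω + α • mlog (stateT H ω t)))).re)


section Helpers
variable {n : ℕ}



lemma myConjPow (U A : Matrix (Fin n) (Fin n) ℂ) (h1 : U * Uᴴ = 1) (h2 : Uᴴ * U = 1) (k : ℕ) :
    (U * A * Uᴴ) ^ k = U * A ^ k * Uᴴ := by
  induction k with
  | zero => simpa using h1.symm
  | succ k ih =>
      rw [pow_succ, pow_succ, ih]
      calc U * A ^ k * Uᴴ * (U * A * Uᴴ) = U * A ^ k * (Uᴴ * U) * A * Uᴴ := by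
            simp only [Matrix.mul_assoc]
        _ = U * (A ^ k * A) * Uᴴ := by rw [h2]; simp only [Matrix.mul_assoc, Matrix.mul_one, Matrix.one_mul]

lemma aeval_conj (U A : Matrix (Fin n) (Fin n) ℂ) (h1 : U * Uᴴ = 1) (h2 : Uᴴ * U = 1)
    (q : Polynomial ℂ) :
    Polynomial.aeval (U * A * Uᴴ) q = U * Polynomial.aeval A q * Uᴴ := by
  rw [Polynomial.aeval_eq_sum_range (x := U * A * Uᴴ), Polynomial.aeval_eq_sum_range (x := A),
    Finset.mul_sum, Finset.sum_mul]
  exact Finset.sum_congr rfl fun k _ => by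
    rw [myConjPow U A h1 h2 k, Matrix.mul_smul, Matrix.smul_mul]

lemma aeval_transpose (A : Matrix (Fin n) (Fin n) ℂ) (q : Polynomial ℂ) :
    Polynomial.aeval Aᵀ q = (Polynomial.aeval A q)ᵀ := by
  rw [Polynomial.aeval_eq_sum_range (x := Aᵀ), Polynomial.aeval_eq_sum_range (x := A),
    Matrix.transpose_sum]
  exact Finset.sum_congr rfl fun k _ => by rw [Matrix.transpose_smul, Matrix.transpose_pow]

lemma aeval_diagonal (d : Fin n → ℂ) (q : Polynomial ℂ) :
    Polynomial.aeval (Matrix.diagonal d) q = Matrix.diagonal (fun i => q.eval (d i)) := by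
  rw [Polynomial.aeval_eq_sum_range (x := Matrix.diagonal d)]
  have : ∀ i, q.eval (d i) = ∑ k ∈ Finset.range (q.natDegree + 1), q.coeff k • (d i) ^ k := by
    intro i
    rw [← Polynomial.aeval_eq_sum_range (x := d i)]
    simp [Polynomial.aeval_def, Polynomial.eval₂_eq_eval_map]
  simp_rw [this]
  rw [show (Matrix.diagonal fun i => ∑ k ∈ Finset.range (q.natDegree + 1), q.coeff k • (d i) ^ k)
      = ∑ k ∈ Finset.range (q.natDegree + 1), Matrix.diagonal (fun i => q.coeff k • (d i) ^ k) by
    ext i j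
    simp only [Matrix.diagonal_apply, Matrix.sum_apply]
    split_ifs <;> simp]
  exact Finset.sum_congr rfl fun k _ => by
    rw [Matrix.diagonal_pow, ← Matrix.diagonal_smul]
    rfl


lemma matCFC_eq_aeval {f : ℝ → ℝ} {A : Matrix (Fin n) (Fin n) ℂ} (hA : A.IsHermitian)
    {q : Polynomial ℝ} (hq : ∀ x ∈ spectrum ℝ A, q.eval x = f x) :
    matCFC f A = Polynomial.aeval A (q.map (algebraMap ℝ ℂ)) := by
  rw [matCFC, dif_pos hA]
  conv_rhs => rw [hA.spectral_theorem, Unitary.conjStarAlgAut_apply]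
  have h1 : (hA.eigenvectorUnitary : Matrix (Fin n) (Fin n) ℂ) * (hA.eigenvectorUnitary : Matrix (Fin n) (Fin n) ℂ)ᴴ = 1 := by
    rw [← Matrix.star_eq_conjTranspose]
    exact Unitary.coe_mul_star_self _
  have h2 : (hA.eigenvectorUnitary : Matrix (Fin n) (Fin n) ℂ)ᴴ * (hA.eigenvectorUnitary : Matrix (Fin n) (Fin n) ℂ) = 1 := by
    rw [← Matrix.star_eq_conjTranspose]
    exact Unitary.coe_star_mul_self _
  rw [show (star hA.eigenvectorUnitary : Matrix (Fin n) (Fin n) ℂ)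
      = (hA.eigenvectorUnitary : Matrix (Fin n) (Fin n) ℂ)ᴴ from rfl]
  rw [aeval_conj _ _ h1 h2, aeval_diagonal]
  unfold Matrix.IsHermitian.cfc
  rw [Unitary.conjStarAlgAut_apply]
  rw [← Matrix.star_eq_conjTranspose]
  have : (RCLike.ofReal ∘ f ∘ hA.eigenvalues : Fin n → ℂ)
      = fun i => Polynomial.eval ((hA.eigenvalues i : ℝ) : ℂ) (q.map (algebraMap ℝ ℂ)) := by
    funext i
    have hmem := hA.eigenvalues_mem_spectrum_real i
    rw [show ((hA.eigenvalues i : ℝ) : ℂ) = algebraMap ℝ ℂ (hA.eigenvalues i) from rfl,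
      Polynomial.eval_map, Polynomial.eval₂_at_apply, hq _ hmem]
    rfl
  rw [this]
  rfl

lemma exists_interp (f : ℝ → ℝ) (s : Set ℝ) (hs : s.Finite) :
    ∃ q : Polynomial ℝ, ∀ x ∈ s, q.eval x = f x := by
  refine ⟨Lagrange.interpolate hs.toFinset id f, fun x hx => ?_⟩
  have h := Lagrange.eval_interpolate_at_node (s := hs.toFinset) (v := id) (r := f)
    (Set.injOn_id _) (hs.mem_toFinset.mpr hx)
  simpa using h

lemma spectrum_transpose (A : Matrix (Fin n) (Fin n) ℂ) : spectrum ℝ Aᵀ = spectrum ℝ A := by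
  have key : ∀ B : Matrix (Fin n) (Fin n) ℂ, IsUnit Bᵀ ↔ IsUnit B := fun B => by
    rw [Matrix.isUnit_iff_isUnit_det, Matrix.isUnit_iff_isUnit_det, Matrix.det_transpose]
  have halg : ∀ x : ℝ, (algebraMap ℝ (Matrix (Fin n) (Fin n) ℂ) x)ᵀ
      = algebraMap ℝ (Matrix (Fin n) (Fin n) ℂ) x := fun x => by
    rw [Matrix.algebraMap_eq_diagonal, Matrix.diagonal_transpose]
  ext x
  simp only [spectrum.mem_iff, not_iff_not]
  conv_lhs => rw [show algebraMap ℝ (Matrix (Fin n) (Fin n) ℂ) x - Aᵀ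
    = (algebraMap ℝ (Matrix (Fin n) (Fin n) ℂ) x - A)ᵀ by
      rw [Matrix.transpose_sub, halg]]
  exact key _

lemma matCFC_transpose (f : ℝ → ℝ) {A : Matrix (Fin n) (Fin n) ℂ} (hA : A.IsHermitian) :
    matCFC f Aᵀ = (matCFC f A)ᵀ := by
  obtain ⟨q, hq⟩ := exists_interp f (spectrum ℝ A) A.finite_real_spectrum
  rw [matCFC_eq_aeval hA hq,
    matCFC_eq_aeval hA.transpose (by rw [spectrum_transpose]; exact hq), aeval_transpose]

lemma matCFC_conj (f : ℝ → ℝ) {A U : Matrix (Fin n) (Fin n) ℂ} (hA : A.IsHermitian)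
    (h1 : U * Uᴴ = 1) (h2 : Uᴴ * U = 1) :
    matCFC f (U * A * Uᴴ) = U * matCFC f A * Uᴴ := by
  have hconjH : (U * A * Uᴴ).IsHermitian := Matrix.isHermitian_mul_mul_conjTranspose U hA
  have hU : U ∈ unitary (Matrix (Fin n) (Fin n) ℂ) := ⟨h2, h1⟩
  have hspec : spectrum ℝ (U * A * Uᴴ) = spectrum ℝ A :=
    Unitary.spectrum_star_right_conjugate (U := ⟨U, hU⟩)
  obtain ⟨q, hq⟩ := exists_interp f (spectrum ℝ A) A.finite_real_spectrum
  rw [matCFC_eq_aeval hA hq, matCFC_eq_aeval hconjH (by rw [hspec]; exact hq),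
    aeval_conj _ _ h1 h2]

lemma matCFC_isHermitian (f : ℝ → ℝ) {A : Matrix (Fin n) (Fin n) ℂ} (hA : A.IsHermitian) :
    (matCFC f A).IsHermitian := by
  rw [matCFC, dif_pos hA, ← hA.cfc_eq]
  exact cfc_predicate f A

lemma matCFC_mul {f g h : ℝ → ℝ} {A : Matrix (Fin n) (Fin n) ℂ} (hA : A.IsHermitian)
    (hfg : ∀ x ∈ spectrum ℝ A, f x * g x = h x) :
    matCFC f A * matCFC g A = matCFC h A := by
  obtain ⟨qf, hqf⟩ := exists_interp f _ A.finite_real_spectrum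
  obtain ⟨qg, hqg⟩ := exists_interp g _ A.finite_real_spectrum
  rw [matCFC_eq_aeval hA hqf, matCFC_eq_aeval hA hqg,
    matCFC_eq_aeval hA (q := qf * qg)
      (fun x hx => by rw [Polynomial.eval_mul, hqf x hx, hqg x hx, hfg x hx]),
    Polynomial.map_mul, _root_.map_mul]

lemma pow_mul_shift (X Y : Matrix (Fin n) (Fin n) ℂ) (k : ℕ) :
    (X * Y) ^ (k + 1) = X * (Y * X) ^ k * Y := by
  induction k with
  | zero => simp
  | succ k ih =>
      rw [pow_succ, ih, pow_succ]
      simp only [Matrix.mul_assoc]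

lemma trace_pow_cycle (X Y : Matrix (Fin n) (Fin n) ℂ) (k : ℕ) :
    Matrix.trace ((X * Y) ^ k) = Matrix.trace ((Y * X) ^ k) := by
  cases k with
  | zero => rfl
  | succ k =>
      rw [pow_mul_shift, Matrix.trace_mul_cycle, ← pow_succ']

lemma trace_matCFC_CC (f : ℝ → ℝ) (C : Matrix (Fin n) (Fin n) ℂ) :
    Matrix.trace (matCFC f (Cᴴ * C)) = Matrix.trace (matCFC f (C * Cᴴ)) := by
  have h1 : (Cᴴ * C).IsHermitian := Matrix.isHermitian_conjTranspose_mul_self C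
  have h2 : (C * Cᴴ).IsHermitian := by simpa using Matrix.isHermitian_conjTranspose_mul_self Cᴴ
  obtain ⟨q, hq⟩ := exists_interp f (spectrum ℝ (Cᴴ * C) ∪ spectrum ℝ (C * Cᴴ))
    ((Matrix.finite_real_spectrum (A := Cᴴ * C)).union (Matrix.finite_real_spectrum (A := C * Cᴴ)))
  rw [matCFC_eq_aeval h1 (fun x hx => hq x (Set.mem_union_left _ hx)),
    matCFC_eq_aeval h2 (fun x hx => hq x (Set.mem_union_right _ hx)),
    Polynomial.aeval_eq_sum_range, Polynomial.aeval_eq_sum_range,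
    Matrix.trace_sum, Matrix.trace_sum]
  exact Finset.sum_congr rfl fun k _ => by
    rw [Matrix.trace_smul, Matrix.trace_smul, trace_pow_cycle Cᴴ C k]

lemma posDef_conj {A U : Matrix (Fin n) (Fin n) ℂ} (hA : A.PosDef)
    (h1 : U * Uᴴ = 1) (h2 : Uᴴ * U = 1) : (U * A * Uᴴ).PosDef := by
  refine Matrix.PosDef.of_dotProduct_mulVec_pos (Matrix.isHermitian_mul_mul_conjTranspose U hA.isHermitian) fun x hx => ?_
  have hy : Uᴴ *ᵥ x ≠ 0 := by
    intro h
    apply hx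
    have h3 := congrArg (fun v => U *ᵥ v) h
    simpa [Matrix.mulVec_mulVec, h1] using h3
  have hp := hA.dotProduct_mulVec_pos hy
  have key : star x ⬝ᵥ (U * A * Uᴴ) *ᵥ x = star (Uᴴ *ᵥ x) ⬝ᵥ A *ᵥ (Uᴴ *ᵥ x) := by
    rw [Matrix.star_mulVec, ← Matrix.mulVec_mulVec, ← Matrix.mulVec_mulVec,
      Matrix.dotProduct_mulVec (star x), Matrix.conjTranspose_conjTranspose]
  rw [key]
  exact hp

lemma mexp_conjTranspose (A : Matrix (Fin n) (Fin n) ℂ) : (mexp A)ᴴ = mexp Aᴴ :=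
  (Matrix.exp_conjTranspose A).symm

lemma mexp_transpose (A : Matrix (Fin n) (Fin n) ℂ) : (mexp A)ᵀ = mexp Aᵀ :=
  (Matrix.exp_transpose A).symm

lemma mexp_mul_neg (A : Matrix (Fin n) (Fin n) ℂ) : mexp A * mexp (-A) = 1 := by
  rw [mexp, mexp, ← Matrix.exp_add_of_commute A (-A) (Commute.neg_right (Commute.refl A)),
    add_neg_cancel, NormedSpace.exp_zero]

lemma mexp_neg_mul (A : Matrix (Fin n) (Fin n) ℂ) : mexp (-A) * mexp A = 1 := by
  have := mexp_mul_neg (-A)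
  rwa [neg_neg] at this

lemma smul_iH_conjT {H : Matrix (Fin n) (Fin n) ℂ} (hH : H.IsHermitian) (t : ℝ) :
    ((Complex.I * (t : ℂ)) • H)ᴴ = (-(Complex.I * (t : ℂ))) • H := by
  rw [Matrix.conjTranspose_smul, hH.eq]
  congr 1
  simp [Complex.ext_iff]

section Phi
variable {V : Matrix (Fin n) (Fin n) ℂ}

lemma Phi_mul (hV' : Vᴴ * V = 1) (X Y : Matrix (Fin n) (Fin n) ℂ) :
    V * (X * Y)ᵀ * Vᴴ = (V * Yᵀ * Vᴴ) * (V * Xᵀ * Vᴴ) := by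
  rw [Matrix.transpose_mul]
  calc V * (Yᵀ * Xᵀ) * Vᴴ = V * Yᵀ * (Vᴴ * V) * Xᵀ * Vᴴ := by
        rw [hV']; simp only [Matrix.mul_assoc, Matrix.mul_one, Matrix.one_mul]
    _ = (V * Yᵀ * Vᴴ) * (V * Xᵀ * Vᴴ) := by simp only [Matrix.mul_assoc]

lemma Phi_trace (hV' : Vᴴ * V = 1) (B : Matrix (Fin n) (Fin n) ℂ) :
    Matrix.trace (V * Bᵀ * Vᴴ) = Matrix.trace B := by
  rw [Matrix.trace_mul_cycle, hV', Matrix.one_mul, Matrix.trace_transpose]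

lemma Phi_matCFC (hV : V * Vᴴ = 1) (hV' : Vᴴ * V = 1) (f : ℝ → ℝ)
    {A : Matrix (Fin n) (Fin n) ℂ} (hA : A.IsHermitian) :
    matCFC f (V * Aᵀ * Vᴴ) = V * (matCFC f A)ᵀ * Vᴴ := by
  rw [matCFC_conj f hA.transpose hV hV', matCFC_transpose f hA]

lemma Phi_mexp (hV : V * Vᴴ = 1) (hV' : Vᴴ * V = 1) (A : Matrix (Fin n) (Fin n) ℂ) :
    mexp (V * Aᵀ * Vᴴ) = V * (mexp A)ᵀ * Vᴴ := by
  have hVu : IsUnit V := ⟨⟨V, Vᴴ, hV, hV'⟩, rfl⟩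
  have hinv : V⁻¹ = Vᴴ := Matrix.inv_eq_right_inv hV
  rw [← hinv, mexp, mexp, Matrix.exp_conj V Aᵀ hVu, Matrix.exp_transpose, hinv]

end Phi

section Psi
variable {U : Matrix (Fin n) (Fin n) ℂ}

lemma Psi_mul (hU' : Uᴴ * U = 1) (X Y : Matrix (Fin n) (Fin n) ℂ) :
    U * (X * Y) * Uᴴ = (U * X * Uᴴ) * (U * Y * Uᴴ) := by
  calc U * (X * Y) * Uᴴ = U * X * (Uᴴ * U) * Y * Uᴴ := by
        rw [hU']; simp only [Matrix.mul_assoc, Matrix.mul_one, Matrix.one_mul]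
    _ = (U * X * Uᴴ) * (U * Y * Uᴴ) := by simp only [Matrix.mul_assoc]

lemma Psi_trace (hU' : Uᴴ * U = 1) (B : Matrix (Fin n) (Fin n) ℂ) :
    Matrix.trace (U * B * Uᴴ) = Matrix.trace B := by
  rw [Matrix.trace_mul_cycle, hU', Matrix.one_mul]

end Psi

lemma spectrum_pos_of_posDef {A : Matrix (Fin n) (Fin n) ℂ} (hA : A.PosDef) {x : ℝ}
    (hx : x ∈ spectrum ℝ A) : 0 < x := by
  rw [Matrix.IsHermitian.spectrum_real_eq_range_eigenvalues hA.isHermitian] at hx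
  obtain ⟨i, rfl⟩ := hx
  exact hA.eigenvalues_pos i

lemma mpow_mul_mpow {A : Matrix (Fin n) (Fin n) ℂ} (hA : A.PosDef) (q r : ℝ) :
    mpow A q * mpow A r = mpow A (q + r) := by
  unfold mpow
  exact matCFC_mul hA.isHermitian
    (fun x hx => (Real.rpow_add (spectrum_pos_of_posDef hA hx) q r).symm)

lemma mpow_isHermitian {A : Matrix (Fin n) (Fin n) ℂ} (hA : A.IsHermitian) (q : ℝ) :
    (mpow A q).IsHermitian := matCFC_isHermitian _ hA

lemma herm_PQP {P Q : Matrix (Fin n) (Fin n) ℂ} (hP : P.IsHermitian) (hQ : Q.IsHermitian) :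
    (P * Q * P).IsHermitian := by
  show (P * Q * P)ᴴ = P * Q * P
  simp only [Matrix.conjTranspose_mul, hP.eq, hQ.eq, Matrix.mul_assoc]

section Main

variable {H ω V : Matrix (Fin n) (Fin n) ℂ}

lemma Et_conjT (hH : H.IsHermitian) (t : ℝ) :
    (mexp ((-(Complex.I * (t : ℂ))) • H))ᴴ = mexp ((Complex.I * (t : ℂ)) • H) := by
  rw [mexp_conjTranspose]
  congr 1
  rw [neg_smul, Matrix.conjTranspose_neg, smul_iH_conjT hH, neg_smul, neg_neg]

lemma Ut_conjT (hH : H.IsHermitian) (t : ℝ) :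
    (mexp ((Complex.I * (t : ℂ)) • H))ᴴ = mexp ((-(Complex.I * (t : ℂ))) • H) := by
  rw [mexp_conjTranspose, smul_iH_conjT hH]

lemma UE_one (t : ℝ) :
    mexp ((Complex.I * (t : ℂ)) • H) * mexp ((-(Complex.I * (t : ℂ))) • H) = 1 := by
  rw [neg_smul]; exact mexp_mul_neg _

lemma EU_one (t : ℝ) :
    mexp ((-(Complex.I * (t : ℂ))) • H) * mexp ((Complex.I * (t : ℂ)) • H) = 1 := by
  rw [neg_smul]; exact mexp_neg_mul _

lemma Ut_unitary1 (hH : H.IsHermitian) (t : ℝ) :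
    mexp ((Complex.I * (t : ℂ)) • H) * (mexp ((Complex.I * (t : ℂ)) • H))ᴴ = 1 := by
  rw [Ut_conjT hH]; exact UE_one t

lemma Ut_unitary2 (hH : H.IsHermitian) (t : ℝ) :
    (mexp ((Complex.I * (t : ℂ)) • H))ᴴ * mexp ((Complex.I * (t : ℂ)) • H) = 1 := by
  rw [Ut_conjT hH]; exact EU_one t

lemma stateT_eq_conj (hH : H.IsHermitian) (t : ℝ) :
    stateT H ω t = mexp ((-(Complex.I * (t : ℂ))) • H) * ω *
      (mexp ((-(Complex.I * (t : ℂ))) • H))ᴴ := by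
  rw [stateT, Et_conjT hH]

lemma stateT_posDef (hH : H.IsHermitian) (hω : ω.PosDef) (t : ℝ) :
    (stateT H ω t).PosDef := by
  rw [stateT_eq_conj hH]
  refine posDef_conj hω ?_ ?_
  · rw [Et_conjT hH]; exact EU_one t
  · rw [Et_conjT hH]; exact UE_one t

lemma stateT_neg (t : ℝ) :
    stateT H ω (-t) = mexp ((Complex.I * (t : ℂ)) • H) * ω *
      mexp ((-(Complex.I * (t : ℂ))) • H) := by
  simp [stateT, Complex.ofReal_neg, mul_neg]

-- Φ-covariance
lemma Phi_smul_H (hTRIH : V * Hᵀ * Vᴴ = H) (c : ℂ) :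
    V * (c • H)ᵀ * Vᴴ = c • H := by
  rw [Matrix.transpose_smul, Matrix.mul_smul, Matrix.smul_mul, hTRIH]

lemma Phi_Ut (hV : V * Vᴴ = 1) (hV' : Vᴴ * V = 1) (hTRIH : V * Hᵀ * Vᴴ = H) (c : ℂ) :
    V * (mexp (c • H))ᵀ * Vᴴ = mexp (c • H) := by
  rw [← Phi_mexp hV hV', Phi_smul_H hTRIH]

lemma Phi_state (hV : V * Vᴴ = 1) (hV' : Vᴴ * V = 1) (hTRIH : V * Hᵀ * Vᴴ = H)
    (hTRIω : V * ωᵀ * Vᴴ = ω) (t : ℝ) :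
    V * (stateT H ω t)ᵀ * Vᴴ = stateT H ω (-t) := by
  rw [stateT, stateT_neg, Phi_mul hV', Phi_mul hV', hTRIω,
    Phi_Ut hV hV' hTRIH, Phi_Ut hV hV' hTRIH]
  simp only [Matrix.mul_assoc]

-- Ψ-covariance with U = mexp((I t)•H)
lemma Psi_state (hH : H.IsHermitian) (t : ℝ) :
    mexp ((Complex.I * (t : ℂ)) • H) * stateT H ω t *
      (mexp ((Complex.I * (t : ℂ)) • H))ᴴ = ω := by
  rw [Ut_conjT hH, stateT]
  calc mexp ((Complex.I * (t : ℂ)) • H) * (mexp ((-(Complex.I * (t : ℂ))) • H) * ω *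
        mexp ((Complex.I * (t : ℂ)) • H)) * mexp ((-(Complex.I * (t : ℂ))) • H)
      = (mexp ((Complex.I * (t : ℂ)) • H) * mexp ((-(Complex.I * (t : ℂ))) • H)) * ω *
        (mexp ((Complex.I * (t : ℂ)) • H) * mexp ((-(Complex.I * (t : ℂ))) • H)) := by
        simp only [Matrix.mul_assoc]
    _ = ω := by rw [UE_one]; simp

lemma Psi_omega (hH : H.IsHermitian) (t : ℝ) :
    mexp ((Complex.I * (t : ℂ)) • H) * ω * (mexp ((Complex.I * (t : ℂ)) • H))ᴴ
      = stateT H ω (-t) := by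
  rw [Ut_conjT hH, stateT_neg]

end Main

section Conj

variable {U A V : Matrix (Fin n) (Fin n) ℂ}

lemma Psi_mpow (hA : A.IsHermitian) (h1 : U * Uᴴ = 1) (h2 : Uᴴ * U = 1) (q : ℝ) :
    mpow (U * A * Uᴴ) q = U * mpow A q * Uᴴ := matCFC_conj _ hA h1 h2

lemma Psi_mlog (hA : A.IsHermitian) (h1 : U * Uᴴ = 1) (h2 : Uᴴ * U = 1) :
    mlog (U * A * Uᴴ) = U * mlog A * Uᴴ := matCFC_conj _ hA h1 h2

lemma Psi_mexp (h1 : U * Uᴴ = 1) (h2 : Uᴴ * U = 1) (A : Matrix (Fin n) (Fin n) ℂ) :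
    mexp (U * A * Uᴴ) = U * mexp A * Uᴴ := by
  have hUu : IsUnit U := ⟨⟨U, Uᴴ, h1, h2⟩, rfl⟩
  have hinv : U⁻¹ = Uᴴ := Matrix.inv_eq_right_inv h1
  rw [← hinv, mexp, mexp, Matrix.exp_conj U A hUu]

lemma Phi_mpow (hV : V * Vᴴ = 1) (hV' : Vᴴ * V = 1) (hA : A.IsHermitian) (q : ℝ) :
    mpow (V * Aᵀ * Vᴴ) q = V * (mpow A q)ᵀ * Vᴴ := Phi_matCFC hV hV' _ hA

lemma Phi_mlog (hV : V * Vᴴ = 1) (hV' : Vᴴ * V = 1) (hA : A.IsHermitian) :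
    mlog (V * Aᵀ * Vᴴ) = V * (mlog A)ᵀ * Vᴴ := Phi_matCFC hV hV' _ hA

end Conj

section BigLemmas

variable {H ω V : Matrix (Fin n) (Fin n) ℂ}

lemma ePressure_TRI (hH : H.IsHermitian) (hω : ω.PosDef)
    (hV : V * Vᴴ = 1) (hV' : Vᴴ * V = 1) (hTRIH : V * Hᵀ * Vᴴ = H) (hTRIω : V * ωᵀ * Vᴴ = ω)
    (p t α : ℝ) : ePressure H ω p t α = ePressure H ω p (-t) α := by
  have hst := stateT_posDef hH hω t
  have hPω : (mpow ω ((1 - α)/p)).IsHermitian := mpow_isHermitian hω.isHermitian _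
  have hPst : (mpow (stateT H ω t) (2*α/p)).IsHermitian := mpow_isHermitian hst.isHermitian _
  have hM : (mpow ω ((1 - α)/p) * mpow (stateT H ω t) (2*α/p) * mpow ω ((1 - α)/p)).IsHermitian :=
    herm_PQP hPω hPst
  have e1 : V * (mpow ω ((1 - α)/p))ᵀ * Vᴴ = mpow ω ((1 - α)/p) := by
    rw [← Phi_mpow hV hV' hω.isHermitian, hTRIω]
  have e2 : V * (mpow (stateT H ω t) (2*α/p))ᵀ * Vᴴ = mpow (stateT H ω (-t)) (2*α/p) := by
    rw [← Phi_mpow hV hV' hst.isHermitian, Phi_state hV hV' hTRIH hTRIω]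
  have hΦM : V * (mpow ω ((1 - α)/p) * mpow (stateT H ω t) (2*α/p) * mpow ω ((1 - α)/p))ᵀ * Vᴴ
      = mpow ω ((1 - α)/p) * mpow (stateT H ω (-t)) (2*α/p) * mpow ω ((1 - α)/p) := by
    rw [Phi_mul hV', Phi_mul hV', e1, e2]
    simp only [Matrix.mul_assoc]
  have key : Matrix.trace (mpow
      (mpow ω ((1 - α)/p) * mpow (stateT H ω (-t)) (2*α/p) * mpow ω ((1 - α)/p)) (p/2))
      = Matrix.trace (mpow
      (mpow ω ((1 - α)/p) * mpow (stateT H ω t) (2*α/p) * mpow ω ((1 - α)/p)) (p/2)) := by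
    rw [← hΦM, Phi_mpow hV hV' hM, Phi_trace hV']
  unfold ePressure
  rw [key]

lemma ePressure_I (hH : H.IsHermitian) (hω : ω.PosDef) (p t α : ℝ) :
    ePressure H ω p t α = ePressure H ω p (-t) (1 - α) := by
  have hst := stateT_posDef hH hω t
  have hU1 := Ut_unitary1 (H := H) hH t
  have hU2 := Ut_unitary2 (H := H) hH t
  set X := mpow (stateT H ω t) (α/p) * mpow ω ((1 - α)/p) with hXdef
  have hXc : Xᴴ = mpow ω ((1 - α)/p) * mpow (stateT H ω t) (α/p) := by
    rw [hXdef, Matrix.conjTranspose_mul, (mpow_isHermitian hω.isHermitian _).eq,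
      (mpow_isHermitian hst.isHermitian _).eq]
  have hXX : Xᴴ * X = mpow ω ((1 - α)/p) * mpow (stateT H ω t) (2*α/p) * mpow ω ((1 - α)/p) := by
    rw [hXc, hXdef]
    calc (mpow ω ((1 - α)/p) * mpow (stateT H ω t) (α/p)) *
          (mpow (stateT H ω t) (α/p) * mpow ω ((1 - α)/p))
        = mpow ω ((1 - α)/p) * (mpow (stateT H ω t) (α/p) * mpow (stateT H ω t) (α/p)) *
          mpow ω ((1 - α)/p) := by simp only [Matrix.mul_assoc]
      _ = _ := by rw [mpow_mul_mpow hst, show α/p + α/p = 2*α/p by ring]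
  have hXX' : X * Xᴴ = mpow (stateT H ω t) (α/p) * mpow ω (2*(1 - α)/p) *
      mpow (stateT H ω t) (α/p) := by
    rw [hXc, hXdef]
    calc (mpow (stateT H ω t) (α/p) * mpow ω ((1 - α)/p)) *
          (mpow ω ((1 - α)/p) * mpow (stateT H ω t) (α/p))
        = mpow (stateT H ω t) (α/p) * (mpow ω ((1 - α)/p) * mpow ω ((1 - α)/p)) *
          mpow (stateT H ω t) (α/p) := by simp only [Matrix.mul_assoc]
      _ = _ := by rw [mpow_mul_mpow hω, show (1 - α)/p + (1 - α)/p = 2*(1 - α)/p by ring]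
  have hXXherm : (X * Xᴴ).IsHermitian := by
    simpa using Matrix.isHermitian_conjTranspose_mul_self Xᴴ
  have t1 : Matrix.trace (mpow (Xᴴ * X) (p/2)) = Matrix.trace (mpow (X * Xᴴ) (p/2)) :=
    trace_matCFC_CC (fun x => x ^ (p/2)) X
  have e1 : mexp ((Complex.I * (t : ℂ)) • H) * mpow (stateT H ω t) (α/p) *
      (mexp ((Complex.I * (t : ℂ)) • H))ᴴ = mpow ω (α/p) := by
    rw [← Psi_mpow hst.isHermitian hU1 hU2, Psi_state hH]
  have e2 : mexp ((Complex.I * (t : ℂ)) • H) * mpow ω (2*(1 - α)/p) *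
      (mexp ((Complex.I * (t : ℂ)) • H))ᴴ = mpow (stateT H ω (-t)) (2*(1 - α)/p) := by
    rw [← Psi_mpow hω.isHermitian hU1 hU2, Psi_omega hH]
  have hΨ : mexp ((Complex.I * (t : ℂ)) • H) * (X * Xᴴ) *
      (mexp ((Complex.I * (t : ℂ)) • H))ᴴ
      = mpow ω (α/p) * mpow (stateT H ω (-t)) (2*(1 - α)/p) * mpow ω (α/p) := by
    rw [hXX', Psi_mul hU2, Psi_mul hU2, e1, e2]
  have t2 : Matrix.trace (mpow (X * Xᴴ) (p/2)) = Matrix.trace (mpow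
      (mpow ω (α/p) * mpow (stateT H ω (-t)) (2*(1 - α)/p) * mpow ω (α/p)) (p/2)) := by
    rw [← hΨ, Psi_mpow hXXherm hU1 hU2, Psi_trace hU2]
  unfold ePressure
  rw [show (1 - (1 - α))/p = α/p by ring, ← hXX, t1, t2]

lemma ePressureInf_TRI (hH : H.IsHermitian) (hω : ω.PosDef)
    (hV : V * Vᴴ = 1) (hV' : Vᴴ * V = 1) (hTRIH : V * Hᵀ * Vᴴ = H) (hTRIω : V * ωᵀ * Vᴴ = ω)
    (t α : ℝ) : ePressureInf H ω t α = ePressureInf H ω (-t) α := by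
  have hst := stateT_posDef hH hω t
  have hlog1 : V * (mlog ω)ᵀ * Vᴴ = mlog ω := by
    rw [← Phi_mlog hV hV' hω.isHermitian, hTRIω]
  have hlog2 : V * (mlog (stateT H ω t))ᵀ * Vᴴ = mlog (stateT H ω (-t)) := by
    rw [← Phi_mlog hV hV' hst.isHermitian, Phi_state hV hV' hTRIH hTRIω]
  have hS : V * ((1 - α) • mlog ω + α • mlog (stateT H ω t))ᵀ * Vᴴ
      = (1 - α) • mlog ω + α • mlog (stateT H ω (-t)) := by
    rw [Matrix.transpose_add, Matrix.transpose_smul, Matrix.transpose_smul,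
      Matrix.mul_add, Matrix.add_mul, Matrix.mul_smul, Matrix.smul_mul,
      Matrix.mul_smul, Matrix.smul_mul, hlog1, hlog2]
  have key : Matrix.trace (mexp ((1 - α) • mlog ω + α • mlog (stateT H ω (-t))))
      = Matrix.trace (mexp ((1 - α) • mlog ω + α • mlog (stateT H ω t))) := by
    rw [← hS, Phi_mexp hV hV', Phi_trace hV']
  unfold ePressureInf
  rw [key]

lemma ePressureInf_I (hH : H.IsHermitian) (hω : ω.PosDef) (t α : ℝ) :
    ePressureInf H ω t α = ePressureInf H ω (-t) (1 - α) := by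
  have hst := stateT_posDef hH hω t
  have hU1 := Ut_unitary1 (H := H) hH t
  have hU2 := Ut_unitary2 (H := H) hH t
  have l1 : mexp ((Complex.I * (t : ℂ)) • H) * mlog (stateT H ω t) *
      (mexp ((Complex.I * (t : ℂ)) • H))ᴴ = mlog ω := by
    rw [← Psi_mlog hst.isHermitian hU1 hU2, Psi_state hH]
  have l2 : mexp ((Complex.I * (t : ℂ)) • H) * mlog ω *
      (mexp ((Complex.I * (t : ℂ)) • H))ᴴ = mlog (stateT H ω (-t)) := by
    rw [← Psi_mlog hω.isHermitian hU1 hU2, Psi_omega hH]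
  have hS : mexp ((Complex.I * (t : ℂ)) • H) * ((1 - α) • mlog ω + α • mlog (stateT H ω t)) *
      (mexp ((Complex.I * (t : ℂ)) • H))ᴴ
      = (1 - α) • mlog (stateT H ω (-t)) + α • mlog ω := by
    rw [Matrix.mul_add, Matrix.add_mul, Matrix.mul_smul, Matrix.smul_mul,
      Matrix.mul_smul, Matrix.smul_mul, l1, l2]
  have key : Matrix.trace (mexp ((1 - α) • mlog (stateT H ω (-t)) + α • mlog ω))
      = Matrix.trace (mexp ((1 - α) • mlog ω + α • mlog (stateT H ω t))) := by
    rw [← hS, Psi_mexp hU1 hU2, Psi_trace hU2]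
  unfold ePressureInf
  rw [show (1 : ℝ) - (1 - α) = α by ring, add_comm (α • mlog ω), key]

end BigLemmas

end Helpers

/-- under time-reversal invariance, `e_{p,t}(α) = e_{p,t}(1-α)` and
`e_{p,t}(α) = e_{p,-t}(α)` for all `p ∈ (0,∞)`, `t`, `α`; the same identities hold
for `e_{∞,t}`. -/
theorem stmt8 {n : ℕ} (H ω V : Matrix (Fin n) (Fin n) ℂ)
    (hH : H.IsHermitian) (hω : ω.PosDef) (htr : ω.trace = 1)
    (hV : V * Vᴴ = 1) (hV' : Vᴴ * V = 1)
    (hTRIH : V * Hᵀ * Vᴴ = H) (hTRIω : V * ωᵀ * Vᴴ = ω) :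
    (∀ p : ℝ, 0 < p → ∀ t α : ℝ,
      ePressure H ω p t α = ePressure H ω p t (1 - α) ∧
      ePressure H ω p t α = ePressure H ω p (-t) α) ∧
    (∀ t α : ℝ,
      ePressureInf H ω t α = ePressureInf H ω t (1 - α) ∧
      ePressureInf H ω t α = ePressureInf H ω (-t) α) := by
  have hHH : H.IsHermitian := hH
  refine ⟨fun p _ t α => ?_, fun t α => ?_⟩
  · have hII : ∀ s β : ℝ, ePressure H ω p s β = ePressure H ω p (-s) β :=
      fun s β => ePressure_TRI hHH hω hV hV' hTRIH hTRIω p s β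
    refine ⟨?_, hII t α⟩
    calc ePressure H ω p t α = ePressure H ω p (-t) (1 - α) := ePressure_I hHH hω p t α
      _ = ePressure H ω p t (1 - α) := by
          have h := hII (-t) (1 - α); rw [neg_neg] at h; exact h
  · have hII : ∀ s β : ℝ, ePressureInf H ω s β = ePressureInf H ω (-s) β :=
      fun s β => ePressureInf_TRI hHH hω hV hV' hTRIH hTRIω s β
    refine ⟨?_, hII t α⟩
    calc ePressureInf H ω t α = ePressureInf H ω (-t) (1 - α) := ePressureInf_I hHH hω t α
      _ = ePressureInf H ω t (1 - α) := by
          have h := hII (-t) (1 - α); rw [neg_neg] at h; exact h
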